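/- Knot insertion preserves the curve: with the coefficients α_i defined by α_i = 1 for i ≤ q−p, α_i = (ξ̄−ξ_i)/(ξ_{i+p}−ξ_i) for q−p+1 ≤ i ≤ q, and α_i = 0 for i ≥ q+1, and new control points x̄_i = (1−α_i) x_{i−1} + α_i x_i, the B-spline curve over the refined knot vector (with ξ̄ inserted between ξ_q and ξ_{q+1}) equals the original curve: Σ_{i=1}^n N^p_i(ξ) x_i = Σ_{i=1}^{n+1} N̄^p_i(ξ) x̄_i for all ξ. -/
import Mathlib


/-- Cox–de Boor recursion for B-spline basis functions on a knot vector `ξ`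
(1-indexed). Division by zero in Lean gives `0`, which implements the
convention `0/0 = 0`. -/
noncomputable def bspline (ξ : ℕ → ℝ) : ℕ → ℕ → ℝ → ℝ
  | 0, i, x => if ξ i ≤ x ∧ x < ξ (i + 1) then 1 else 0
  | p + 1, i, x =>
      (x - ξ i) / (ξ (i + p + 1) - ξ i) * bspline ξ p i x
      + (ξ (i + p + 2) - x) / (ξ (i + p + 2) - ξ (i + 1)) * bspline ξ p (i + 1) x

/-- The standard knot-insertion coefficients for degree `s`. -/
noncomputable def alphaF (ξ : ℕ → ℝ) (q : ℕ) (b : ℝ) (s i : ℕ) : ℝ :=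
  if i + s ≤ q then 1 else if i ≤ q then (b - ξ i) / (ξ (i + s) - ξ i) else 0

lemma alphaF_of_le {ξ : ℕ → ℝ} {q : ℕ} {b : ℝ} {s i : ℕ} (h : i + s ≤ q) :
    alphaF ξ q b s i = 1 := if_pos h

lemma alphaF_of_mid {ξ : ℕ → ℝ} {q : ℕ} {b : ℝ} {s i : ℕ} (h1 : q < i + s) (h2 : i ≤ q) :
    alphaF ξ q b s i = (b - ξ i) / (ξ (i + s) - ξ i) := by
  unfold alphaF; rw [if_neg (by omega), if_pos h2]

lemma alphaF_of_gt {ξ : ℕ → ℝ} {q : ℕ} {b : ℝ} {s i : ℕ} (h : q < i) :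
    alphaF ξ q b s i = 0 := by
  unfold alphaF; rw [if_neg (by omega), if_neg (by omega)]

/-- `bspline` only depends on the knots with indices `i, …, i+s+1`. -/
lemma bspline_congr : ∀ (s : ℕ) (ξ η : ℕ → ℝ) (i j : ℕ),
    (∀ k, k ≤ s + 1 → ξ (i + k) = η (j + k)) → ∀ t, bspline ξ s i t = bspline η s j t := by
  intro s
  induction s with
  | zero =>
    intro ξ η i j h t
    have h0 : ξ i = η j := by simpa using h 0 (by omega)
    have h1 : ξ (i + 1) = η (j + 1) := h 1 (by omega)
    simp only [bspline, h0, h1]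
  | succ s ih =>
    intro ξ η i j h t
    have h0 : ξ i = η j := by simpa using h 0 (by omega)
    have h1 : ξ (i + 1) = η (j + 1) := h 1 (by omega)
    have h2 : ξ (i + s + 1) = η (j + s + 1) := by
      have := h (s + 1) (by omega)
      rwa [show i + (s + 1) = i + s + 1 by omega, show j + (s + 1) = j + s + 1 by omega] at this
    have h3 : ξ (i + s + 2) = η (j + s + 2) := by
      have := h (s + 2) (by omega)
      rwa [show i + (s + 2) = i + s + 2 by omega, show j + (s + 2) = j + s + 2 by omega] at this
    have r1 : bspline ξ s i t = bspline η s j t := ih ξ η i j (fun k hk => h k (by omega)) t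
    have r2 : bspline ξ s (i + 1) t = bspline η s (j + 1) t := by
      refine ih ξ η (i + 1) (j + 1) (fun k hk => ?_) t
      have := h (k + 1) (by omega)
      rwa [show i + (k + 1) = i + 1 + k by omega, show j + (k + 1) = j + 1 + k by omega] at this
    simp only [bspline, h0, h1, h2, h3, r1, r2]

/-- A basis function over a degenerate knot span vanishes. -/
lemma bspline_zero (η : ℕ → ℝ) (hm : Monotone η) :
    ∀ (s i : ℕ), η i = η (i + s + 1) → ∀ t, bspline η s i t = 0 := by
  intro s
  cases s with
  | zero =>
    intro i h t
    have h' : η i = η (i + 1) := by simpa using h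
    simp only [bspline]
    rw [if_neg]
    rintro ⟨h1, h2⟩
    rw [← h'] at h2
    linarith
  | succ s =>
    intro i h t
    have h' : η i = η (i + s + 2) := by rwa [show i + (s + 1) + 1 = i + s + 2 by omega] at h
    have e1 : η (i + s + 1) - η i = 0 := by
      have a := hm (show i ≤ i + s + 1 by omega)
      have c := hm (show i + s + 1 ≤ i + s + 2 by omega)
      linarith [h']
    have e2 : η (i + s + 2) - η (i + 1) = 0 := by
      have a := hm (show i ≤ i + 1 by omega)
      have c := hm (show i + 1 ≤ i + s + 2 by omega)
      linarith [h']
    simp only [bspline, e1, e2, div_zero, zero_mul, add_zero]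

lemma alg1 (E w b t : ℝ) (he : b - w ≠ 0) (hD : E - w ≠ 0) :
    (E - t) / (E - w) = (b - t) / (b - w) + (1 - (b - w) / (E - w)) * ((t - w) / (b - w)) := by
  field_simp; ring
lemma alg2 (E1 E2 u w b t : ℝ) (h1 : E1 - u ≠ 0) (h2 : E1 - w ≠ 0) (h3 : E2 - w ≠ 0) :
    (t - u) / (E1 - u) * (1 - (b - w) / (E1 - w))
      + (E2 - t) / (E2 - w) * ((b - w) / (E1 - w))
    = (b - u) / (E1 - u) * ((E1 - t) / (E1 - w))
      + (1 - (b - w) / (E2 - w)) * ((t - w) / (E1 - w)) := by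
  field_simp; ring
lemma alg3 (E u b t : ℝ) (h1 : E - u ≠ 0) (h2 : E - b ≠ 0) :
    (t - u) / (E - u) = (b - u) / (E - u) * ((E - t) / (E - b)) + (t - b) / (E - b) := by
  field_simp; ring
lemma alg4 (E w1 w2 b t : ℝ) (h1 : E - w1 ≠ 0) (h2 : E - w2 ≠ 0) :
    (E - t) / (E - w1) * (1 - (b - w2) / (E - w2))
      = (1 - (b - w1) / (E - w1)) * ((E - t) / (E - w2)) := by
  field_simp; ring
lemma alg5 (E u b t : ℝ) (h1 : E - u ≠ 0) (h2 : E - b ≠ 0) :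
    (E - t) / (E - u) = (1 - (b - u) / (E - u)) * ((E - t) / (E - b)) := by
  field_simp; ring

section Insertion

variable (ξ ξb : ℕ → ℝ) (q : ℕ) (b : ℝ)

lemma xb_monotone (hmono : Monotone ξ) (hb1 : ξ q ≤ b) (hb2 : b < ξ (q + 1))
    (hξb1 : ∀ i ≤ q, ξb i = ξ i) (hξb2 : ξb (q + 1) = b)
    (hξb3 : ∀ i, q + 2 ≤ i → ξb i = ξ (i - 1)) : Monotone ξb := by
  apply monotone_nat_of_le_succ
  intro i
  rcases lt_trichotomy i q with h | h | h
  · rw [hξb1 i (by omega), hξb1 (i + 1) (by omega)]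
    exact hmono (by omega)
  · subst h
    rw [hξb1 i le_rfl, hξb2]
    exact hb1
  · rcases eq_or_lt_of_le (show q + 1 ≤ i by omega) with h' | h'
    · rw [← h', hξb2, hξb3 (q + 1 + 1) (by omega)]
      have : q + 1 + 1 - 1 = q + 1 := by omega
      rw [this]
      exact hb2.le
    · rw [hξb3 i (by omega), hξb3 (i + 1) (by omega)]
      exact hmono (by omega)

variable (hmono : Monotone ξ) (hmb : Monotone ξb) (hb1 : ξ q ≤ b) (hb2 : b < ξ (q + 1))
  (hξb1 : ∀ i ≤ q, ξb i = ξ i) (hξb2 : ξb (q + 1) = b)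
  (hξb3 : ∀ i, q + 2 ≤ i → ξb i = ξ (i - 1))

include hmono hmb hb1 hb2 hξb1 hξb2 hξb3

lemma Lone (s i : ℕ) (hi : i ≤ q) (his : q ≤ i + s + 1) (t : ℝ) :
    (t - ξ i) / (ξ (i + s + 1) - ξ i) * (alphaF ξ q b s i * bspline ξb s i t)
      = alphaF ξ q b (s + 1) i *
        ((t - ξb i) / (ξb (i + s + 1) - ξb i) * bspline ξb s i t) := by
  by_cases hc : i + s + 1 ≤ q
  · rw [alphaF_of_le (show i + s ≤ q by omega), alphaF_of_le (show i + (s + 1) ≤ q by omega),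
      hξb1 i (by omega), hξb1 (i + s + 1) hc]
    ring
  · by_cases hc2 : i + s ≤ q
    · have hisq : i + s = q := by omega
      rw [alphaF_of_le (by omega), alphaF_of_mid (show q < i + (s + 1) by omega) hi,
        hξb1 i hi, show ξb (i + s + 1) = b by rw [show i + s + 1 = q + 1 by omega, hξb2],
        show i + (s + 1) = i + s + 1 by omega]
      by_cases hbi : b = ξ i
      · have hM : bspline ξb s i t = 0 := by
          refine bspline_zero ξb hmb s i ?_ t
          rw [hξb1 i hi, show i + s + 1 = q + 1 by omega, hξb2, ← hbi]
        rw [hM]; ring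
      · have hbi' : b - ξ i ≠ 0 := sub_ne_zero.mpr hbi
        have hc : (b - ξ i) / (ξ (i + s + 1) - ξ i) * ((t - ξ i) / (b - ξ i))
            = (t - ξ i) / (ξ (i + s + 1) - ξ i) := by
          rw [div_mul_div_comm, mul_comm (b - ξ i) (t - ξ i),
            mul_div_mul_right _ _ hbi']
        linear_combination (-(bspline ξb s i t)) * hc
    · have h1 : q < i + s := by omega
      rw [alphaF_of_mid h1 hi, alphaF_of_mid (show q < i + (s + 1) by omega) hi,
        hξb1 i hi, show ξb (i + s + 1) = ξ (i + s) by
          rw [hξb3 (i + s + 1) (by omega), show i + s + 1 - 1 = i + s from by omega],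
        show i + (s + 1) = i + s + 1 by omega]
      ring

lemma Ltwo (s i : ℕ) (hi : i ≤ q) (his : q ≤ i + s + 1) (t : ℝ) :
    (t - ξ i) / (ξ (i + s + 1) - ξ i) * ((1 - alphaF ξ q b s (i + 1)) * bspline ξb s (i + 1) t)
      + (ξ (i + s + 2) - t) / (ξ (i + s + 2) - ξ (i + 1)) *
          (alphaF ξ q b s (i + 1) * bspline ξb s (i + 1) t)
      = alphaF ξ q b (s + 1) i *
          ((ξb (i + s + 2) - t) / (ξb (i + s + 2) - ξb (i + 1)) * bspline ξb s (i + 1) t)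
        + (1 - alphaF ξ q b (s + 1) (i + 1)) *
          ((t - ξb (i + 1)) / (ξb (i + s + 2) - ξb (i + 1)) * bspline ξb s (i + 1) t) := by
  by_cases hI : i + s + 1 ≤ q
  · -- here i + s + 1 = q
    have hq : i + s + 1 = q := le_antisymm hI his
    rw [alphaF_of_le (show i + 1 + s ≤ q by omega),
      alphaF_of_le (show i + (s + 1) ≤ q by omega),
      alphaF_of_mid (show q < i + 1 + (s + 1) by omega) (show i + 1 ≤ q by omega),
      hξb1 (i + 1) (by omega), show ξb (i + s + 2) = b by rw [show i + s + 2 = q + 1 by omega, hξb2],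
      show i + 1 + (s + 1) = i + s + 2 by omega]
    by_cases hb' : b = ξ (i + 1)
    · have hM : bspline ξb s (i + 1) t = 0 := by
        refine bspline_zero ξb hmb s (i + 1) ?_ t
        rw [hξb1 (i + 1) (by omega), show i + 1 + s + 1 = q + 1 by omega, hξb2, ← hb']
      rw [hM]; ring
    · have he : b - ξ (i + 1) ≠ 0 := sub_ne_zero.mpr hb'
      have hD : ξ (i + s + 2) - ξ (i + 1) ≠ 0 := by
        have h1 : ξ (i + 1) ≤ ξ q := hmono (by omega)
        have h2 : ξ (i + s + 2) = ξ (q + 1) := by rw [show i + s + 2 = q + 1 by omega]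
        have := hb1; have := hb2
        rw [h2]; intro hz; linarith [sub_eq_zero.mp hz]
      have hc2 := alg1 (ξ (i + s + 2)) (ξ (i + 1)) b t he hD
      linear_combination bspline ξb s (i + 1) t * hc2
  · by_cases hII : i + 1 ≤ q
    · -- middle case
      rw [alphaF_of_mid (show q < i + 1 + s by omega) hII,
        alphaF_of_mid (show q < i + (s + 1) by omega) hi,
        alphaF_of_mid (show q < i + 1 + (s + 1) by omega) hII,
        hξb1 (i + 1) (by omega),
        show ξb (i + s + 2) = ξ (i + s + 1) by
          rw [hξb3 (i + s + 2) (by omega), show i + s + 2 - 1 = i + s + 1 from by omega],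
        show i + 1 + s = i + s + 1 by omega,
        show i + (s + 1) = i + s + 1 by omega,
        show i + 1 + (s + 1) = i + s + 2 by omega]
      have k1 : ξ (i + 1) ≤ ξ q := hmono (by omega)
      have k0 : ξ i ≤ ξ (i + 1) := hmono (by omega)
      have k2 : ξ (q + 1) ≤ ξ (i + s + 1) := hmono (by omega)
      have k3 : ξ (i + s + 1) ≤ ξ (i + s + 2) := hmono (by omega)
      have hE1w : ξ (i + s + 1) - ξ (i + 1) ≠ 0 := by intro hz; nlinarith [sub_eq_zero.mp hz]
      have hE1i : ξ (i + s + 1) - ξ i ≠ 0 := by intro hz; nlinarith [sub_eq_zero.mp hz]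
      have hE2w : ξ (i + s + 2) - ξ (i + 1) ≠ 0 := by intro hz; nlinarith [sub_eq_zero.mp hz]
      have hc2 := alg2 (ξ (i + s + 1)) (ξ (i + s + 2)) (ξ i) (ξ (i + 1)) b t hE1i hE1w hE2w
      linear_combination bspline ξb s (i + 1) t * hc2
    · -- i = q
      have hiq : i = q := by omega
      subst hiq
      rw [alphaF_of_gt (show i < i + 1 by omega),
        alphaF_of_mid (show i < i + (s + 1) by omega) le_rfl,
        alphaF_of_gt (show i < i + 1 by omega),
        hξb2, show ξb (i + s + 2) = ξ (i + s + 1) by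
          rw [hξb3 (i + s + 2) (by omega), show i + s + 2 - 1 = i + s + 1 from by omega],
        show i + (s + 1) = i + s + 1 by omega]
      have k2 : ξ (i + 1) ≤ ξ (i + s + 1) := hmono (by omega)
      have hEb : ξ (i + s + 1) - b ≠ 0 := by intro hz; nlinarith [sub_eq_zero.mp hz]
      have hEi : ξ (i + s + 1) - ξ i ≠ 0 := by intro hz; nlinarith [sub_eq_zero.mp hz]
      have hc2 := alg3 (ξ (i + s + 1)) (ξ i) b t hEi hEb
      linear_combination bspline ξb s (i + 1) t * hc2

lemma Lthree (s i : ℕ) (hi : i ≤ q) (his : q ≤ i + s + 1) (t : ℝ) :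
    (ξ (i + s + 2) - t) / (ξ (i + s + 2) - ξ (i + 1)) *
        ((1 - alphaF ξ q b s (i + 2)) * bspline ξb s (i + 2) t)
      = (1 - alphaF ξ q b (s + 1) (i + 1)) *
          ((ξb (i + s + 3) - t) / (ξb (i + s + 3) - ξb (i + 2)) * bspline ξb s (i + 2) t) := by
  have hE3 : ξb (i + s + 3) = ξ (i + s + 2) := by
    rw [hξb3 (i + s + 3) (by omega), show i + s + 3 - 1 = i + s + 2 from by omega]
  by_cases ha : i + 2 ≤ q
  · rw [alphaF_of_mid (show q < i + 2 + s by omega) ha,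
      alphaF_of_mid (show q < i + 1 + (s + 1) by omega) (by omega),
      hξb1 (i + 2) ha, hE3,
      show i + 2 + s = i + s + 2 by omega, show i + 1 + (s + 1) = i + s + 2 by omega]
    have k1 : ξ (i + 1) ≤ ξ (i + 2) := hmono (by omega)
    have k2 : ξ (i + 2) ≤ ξ q := hmono ha
    have k3 : ξ (q + 1) ≤ ξ (i + s + 2) := hmono (by omega)
    have h1 : ξ (i + s + 2) - ξ (i + 1) ≠ 0 := by intro hz; nlinarith [sub_eq_zero.mp hz]
    have h2 : ξ (i + s + 2) - ξ (i + 2) ≠ 0 := by intro hz; nlinarith [sub_eq_zero.mp hz]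
    have hc2 := alg4 (ξ (i + s + 2)) (ξ (i + 1)) (ξ (i + 2)) b t h1 h2
    linear_combination bspline ξb s (i + 2) t * hc2
  · by_cases hb' : i + 2 = q + 1
    · rw [alphaF_of_gt (show q < i + 2 by omega),
        alphaF_of_mid (show q < i + 1 + (s + 1) by omega) (by omega),
        show ξb (i + 2) = b by rw [show i + 2 = q + 1 from hb', hξb2], hE3,
        show i + 1 + (s + 1) = i + s + 2 by omega]
      have k1 : ξ (i + 1) ≤ b := by
        have : ξ (i + 1) = ξ q := by rw [show i + 1 = q by omega]
        linarith
      have k3 : ξ (q + 1) ≤ ξ (i + s + 2) := hmono (by omega)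
      have h1 : ξ (i + s + 2) - ξ (i + 1) ≠ 0 := by intro hz; nlinarith [sub_eq_zero.mp hz]
      have h2 : ξ (i + s + 2) - b ≠ 0 := by intro hz; nlinarith [sub_eq_zero.mp hz]
      have hc2 := alg5 (ξ (i + s + 2)) (ξ (i + 1)) b t h1 h2
      linear_combination bspline ξb s (i + 2) t * hc2
    · have hiq : i = q := by omega
      rw [alphaF_of_gt (show q < i + 2 by omega), alphaF_of_gt (show q < i + 1 by omega),
        show ξb (i + 2) = ξ (i + 1) by
          rw [hξb3 (i + 2) (by omega), show i + 2 - 1 = i + 1 from by omega], hE3]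
      ring

lemma bspline_insert (s : ℕ) : ∀ i t, bspline ξ s i t
    = alphaF ξ q b s i * bspline ξb s i t
      + (1 - alphaF ξ q b s (i + 1)) * bspline ξb s (i + 1) t := by
  induction s with
  | zero =>
    intro i t
    by_cases h1 : i + 1 ≤ q
    · rw [alphaF_of_le (show i + 0 ≤ q by omega), alphaF_of_le (show i + 1 + 0 ≤ q by omega),
        one_mul, sub_self, zero_mul, add_zero]
      exact bspline_congr 0 ξ ξb i i (fun k hk => (hξb1 (i + k) (by omega)).symm) t
    · by_cases h2 : q + 1 ≤ i
      · rw [alphaF_of_gt (show q < i by omega), alphaF_of_gt (show q < i + 1 by omega),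
          zero_mul, sub_zero, one_mul, zero_add]
        refine bspline_congr 0 ξ ξb i (i + 1) (fun k hk => ?_) t
        rw [hξb3 (i + 1 + k) (by omega)]
        congr 1
        omega
      · have hiq : i = q := by omega
        subst hiq
        rw [alphaF_of_le (show i + 0 ≤ i by omega), alphaF_of_gt (show i < i + 1 by omega),
          one_mul, sub_zero, one_mul]
        simp only [bspline]
        rw [hξb1 i le_rfl, hξb2, show ξb (i + 1 + 1) = ξ (i + 1) by
          rw [hξb3 (i + 1 + 1) (by omega), show i + 1 + 1 - 1 = i + 1 from by omega]]
        rcases lt_or_ge t b with hB | hB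
        · rw [if_neg (show ¬(b ≤ t ∧ t < ξ (i + 1)) from fun h => absurd h.1 (not_le.mpr hB))]
          by_cases hA : ξ i ≤ t
          · rw [if_pos (show ξ i ≤ t ∧ t < ξ (i + 1) from ⟨hA, hB.trans hb2⟩),
              if_pos (show ξ i ≤ t ∧ t < b from ⟨hA, hB⟩)]
            norm_num
          · rw [if_neg (show ¬(ξ i ≤ t ∧ t < ξ (i + 1)) from fun h => hA h.1),
              if_neg (show ¬(ξ i ≤ t ∧ t < b) from fun h => hA h.1)]
            norm_num
        · rw [if_neg (show ¬(ξ i ≤ t ∧ t < b) from fun h => absurd h.2 (not_lt.mpr hB))]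
          by_cases hC : t < ξ (i + 1)
          · rw [if_pos (show ξ i ≤ t ∧ t < ξ (i + 1) from ⟨hb1.trans hB, hC⟩),
              if_pos (show b ≤ t ∧ t < ξ (i + 1) from ⟨hB, hC⟩)]
            norm_num
          · rw [if_neg (show ¬(ξ i ≤ t ∧ t < ξ (i + 1)) from fun h => hC h.2),
              if_neg (show ¬(b ≤ t ∧ t < ξ (i + 1)) from fun h => hC h.2)]
            norm_num
  | succ s ih =>
    intro i t
    by_cases h1 : i + s + 2 ≤ q
    · rw [alphaF_of_le (show i + (s + 1) ≤ q by omega),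
        alphaF_of_le (show i + 1 + (s + 1) ≤ q by omega),
        one_mul, sub_self, zero_mul, add_zero]
      exact bspline_congr (s + 1) ξ ξb i i (fun k hk => (hξb1 (i + k) (by omega)).symm) t
    · by_cases h2 : q + 1 ≤ i
      · rw [alphaF_of_gt (show q < i by omega), alphaF_of_gt (show q < i + 1 by omega),
          zero_mul, sub_zero, one_mul, zero_add]
        refine bspline_congr (s + 1) ξ ξb i (i + 1) (fun k hk => ?_) t
        rw [hξb3 (i + 1 + k) (by omega)]
        congr 1
        omega
      · have hi : i ≤ q := by omega
        have his : q ≤ i + s + 1 := by omega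
        simp only [bspline]
        rw [ih i t, ih (i + 1) t]
        simp only [show i + 1 + s + 1 = i + s + 2 from by omega,
          show i + 1 + s + 2 = i + s + 3 from by omega,
          show i + 1 + 1 = i + 2 from rfl]
        linear_combination
          Lone ξ ξb q b hmono hmb hb1 hb2 hξb1 hξb2 hξb3 s i hi his t
          + Ltwo ξ ξb q b hmono hmb hb1 hb2 hξb1 hξb2 hξb3 s i hi his t
          + Lthree ξ ξb q b hmono hmb hb1 hb2 hξb1 hξb2 hξb3 s i hi his t

end Insertion

/-- Knot insertion preserves the curve: inserting a knot `b ∈ [ξ_q, ξ_{q+1})`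
and forming the new control points `x̄_i = (1 - α_i) x_{i-1} + α_i x_i`
with the standard coefficients `α_i` leaves the B-spline curve unchanged. -/
theorem knot_insertion_preserves_curve {V : Type*} [AddCommGroup V] [Module ℝ V]
    (ξ ξb : ℕ → ℝ) (n p q : ℕ) (b : ℝ)
    (hmono : Monotone ξ)
    (hq1 : p + 1 ≤ q) (hq2 : q ≤ n)
    (hb1 : ξ q ≤ b) (hb2 : b < ξ (q + 1))
    (hξb1 : ∀ i ≤ q, ξb i = ξ i) (hξb2 : ξb (q + 1) = b)
    (hξb3 : ∀ i, q + 2 ≤ i → ξb i = ξ (i - 1))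
    (α : ℕ → ℝ)
    (hα1 : ∀ i, i + p ≤ q → α i = 1)
    (hα2 : ∀ i, q < i + p → i ≤ q → α i = (b - ξ i) / (ξ (i + p) - ξ i))
    (hα3 : ∀ i, q < i → α i = 0)
    (x xb : ℕ → V)
    (hxb : ∀ i, 1 ≤ i → i ≤ n + 1 → xb i = (1 - α i) • x (i - 1) + α i • x i) :
    ∀ t : ℝ,
      ∑ i ∈ Finset.Icc 1 n, bspline ξ p i t • x i
        = ∑ i ∈ Finset.Icc 1 (n + 1), bspline ξb p i t • xb i := by
  intro t
  have hmb : Monotone ξb := xb_monotone ξ ξb q b hmono hb1 hb2 hξb1 hξb2 hξb3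
  have hαeq : ∀ i, α i = alphaF ξ q b p i := by
    intro i
    unfold alphaF
    split_ifs with h1 h2
    · exact hα1 i h1
    · exact hα2 i (by omega) h2
    · exact hα3 i (by omega)
  have key : ∀ i, bspline ξ p i t
      = alphaF ξ q b p i * bspline ξb p i t
        + (1 - alphaF ξ q b p (i + 1)) * bspline ξb p (i + 1) t :=
    fun i => bspline_insert ξ ξb q b hmono hmb hb1 hb2 hξb1 hξb2 hξb3 p i t
  -- rewrite the new control points
  have hR : ∀ i ∈ Finset.Icc 1 (n + 1), bspline ξb p i t • xb i
      = ((1 - α i) * bspline ξb p i t) • x (i - 1) + (α i * bspline ξb p i t) • x i := by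
    intro i hi
    rw [Finset.mem_Icc] at hi
    rw [hxb i hi.1 hi.2, smul_add, smul_smul, smul_smul,
      mul_comm (bspline ξb p i t) (1 - α i), mul_comm (bspline ξb p i t) (α i)]
  rw [Finset.sum_congr rfl hR, Finset.sum_add_distrib]
  rw [← Finset.Ico_add_one_right_eq_Icc 1 n, ← Finset.Ico_add_one_right_eq_Icc 1 (n + 1),
    Finset.sum_Ico_eq_sum_range, Finset.sum_Ico_eq_sum_range, Finset.sum_Ico_eq_sum_range]
  simp only [show n + 1 - 1 = n from by omega, show n + 1 + 1 - 1 = n + 1 from by omega,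
    Nat.add_sub_cancel_left]
  -- peel the first term of the first sum, the last term of the second sum
  rw [Finset.sum_range_succ' (fun j => ((1 - α (1 + j)) * bspline ξb p (1 + j) t) • x j) n]
  rw [Finset.sum_range_succ (fun j => (α (1 + j) * bspline ξb p (1 + j) t) • x (1 + j)) n]
  have e1 : ((1 - α (1 + 0)) * bspline ξb p (1 + 0) t) • x 0 = 0 := by
    rw [show (1 : ℕ) + 0 = 1 from rfl, hαeq 1, alphaF_of_le (show 1 + p ≤ q by omega)]
    simp
  have e2 : (α (1 + n) * bspline ξb p (1 + n) t) • x (1 + n) = 0 := by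
    rw [hαeq (1 + n), alphaF_of_gt (show q < 1 + n by omega)]
    simp
  rw [e1, e2, add_zero, add_zero, ← Finset.sum_add_distrib]
  refine Finset.sum_congr rfl fun j hj => ?_
  rw [key (1 + j), hαeq (1 + j), hαeq (1 + (j + 1)),
    show 1 + (j + 1) = 1 + j + 1 from by omega,
    show j + 1 = 1 + j from by omega, add_smul, add_comm]
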